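/- Let f(x) = g(Wx) with W ∈ ℤ^{m×n} and g convex with L-Lipschitz continuous gradients (meaning ‖∇g(u) − ∇g(v)‖_∞ ≤ L‖u − v‖₁ for all u,v). Suppose f admits δ-proximity with δ ≥ 1. Let x* ∈ [0,1]^n be a constrained continuous minimum of f with at most m fractional entries. Then there exists an integer minimum z* ∈ {0,1}^n of f over {0,1}^n such that for every index k: if (∇f(x*))_k > (δ−1)L then z*_k = 0, and if (∇f(x*))_k < −(δ−1)L then z*_k = 1. -/

import Mathlib

open Set

lemma grad_ineq_aux {n : ℕ} {f : (Fin n → ℝ) → ℝ} (hc : ConvexOn ℝ Set.univ f)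
    (hd : Differentiable ℝ f) (a b : Fin n → ℝ) :
    fderiv ℝ f a (b - a) ≤ f b - f a := by
  set h : ℝ → ℝ := fun t => f (a + t • (b - a)) with hh
  have hγ : HasDerivAt (fun s : ℝ => a + s • (b - a)) (b - a) 0 := by
    simpa using ((hasDerivAt_id (0:ℝ)).smul_const (b - a)).const_add a
  have hderiv : HasDerivAt h (fderiv ℝ f a (b - a)) 0 := by
    have := (hd (a + (0:ℝ) • (b - a))).hasFDerivAt.comp_hasDerivAt 0 hγ
    rw [zero_smul, add_zero] at this
    exact this
  have hch : ConvexOn ℝ Set.univ h := by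
    have := hc.comp_affineMap (AffineMap.lineMap a b : ℝ →ᵃ[ℝ] (Fin n → ℝ))
    have heq : (f ∘ (AffineMap.lineMap a b : ℝ →ᵃ[ℝ] (Fin n → ℝ))) = h := by
      funext t
      simp [hh, AffineMap.lineMap_apply, add_comm]
    rw [heq] at this
    simpa using this
  have := hch.le_slope_of_hasDerivAt (Set.mem_univ (0:ℝ)) (Set.mem_univ (1:ℝ)) one_pos hderiv
  simpa [slope_def_field, hh] using this
open Set

lemma fo_aux {n : ℕ} {f : (Fin n → ℝ) → ℝ} (hd : Differentiable ℝ f)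
    {xs : Fin n → ℝ} (hxs : ∀ i, xs i ∈ Set.Icc (0:ℝ) 1)
    (hmin : ∀ y : Fin n → ℝ, (∀ i, y i ∈ Set.Icc (0:ℝ) 1) → f xs ≤ f y) (k : Fin n) :
    (0 < fderiv ℝ f xs (Pi.single k 1) → xs k = 0) ∧
      (fderiv ℝ f xs (Pi.single k 1) < 0 → xs k = 1) := by
  set s : Set (Fin n → ℝ) := {x | ∀ i, x i ∈ Set.Icc (0:ℝ) 1} with hs
  have hconvs : Convex ℝ s := by
    have hse : s = Set.pi Set.univ (fun _ : Fin n => Set.Icc (0:ℝ) 1) := by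
      ext x; simp only [hs, Set.mem_univ_pi, Set.mem_setOf_eq]
    rw [hse]; exact convex_pi (fun i _ => convex_Icc 0 1)
  have hminon : IsMinOn f s xs := fun y hy => hmin y hy
  have key : ∀ y ∈ s, 0 ≤ fderiv ℝ f xs (y - xs) := by
    intro y hy
    exact hminon.localize.hasFDerivWithinAt_nonneg (hd xs).hasFDerivAt.hasFDerivWithinAt
      (sub_mem_posTangentConeAt_of_segment_subset (hconvs.segment_subset hxs hy))
  constructor
  · intro hpos
    by_contra hne
    have hxk : 0 < xs k := lt_of_le_of_ne (hxs k).1 (Ne.symm hne)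
    have hy : Function.update xs k 0 ∈ s := by
      intro i
      by_cases hik : i = k
      · subst hik; simp
      · simpa [Function.update, hik] using hxs i
    have hyx : Function.update xs k 0 - xs = (-(xs k)) • (Pi.single k 1 : Fin n → ℝ) := by
      funext i
      by_cases hik : i = k
      · subst hik; simp
      · simp [Function.update, hik, Pi.single_eq_of_ne hik]
    have := key _ hy
    rw [hyx, map_smul] at this
    simp only [smul_eq_mul] at this
    nlinarith
  · intro hneg
    by_contra hne
    have hxk : xs k < 1 := lt_of_le_of_ne (hxs k).2 hne
    have hy : Function.update xs k 1 ∈ s := by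
      intro i
      by_cases hik : i = k
      · subst hik; simp
      · simpa [Function.update, hik] using hxs i
    have hyx : Function.update xs k 1 - xs = (1 - xs k) • (Pi.single k 1 : Fin n → ℝ) := by
      funext i
      by_cases hik : i = k
      · subst hik; simp
      · simp [Function.update, hik, Pi.single_eq_of_ne hik]
    have := key _ hy
    rw [hyx, map_smul] at this
    simp only [smul_eq_mul] at this
    nlinarith

/-- Small gradients lemma: large coordinates of the gradient at a fractional
minimum force the corresponding coordinates of some integral minimum. -/
theorem stmt6 (m n : ℕ) (W : Matrix (Fin m) (Fin n) ℤ) (g : (Fin m → ℝ) → ℝ)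
    (L δ : ℝ) (hδ : 1 ≤ δ)
    (f : (Fin n → ℝ) → ℝ)
    (hf : f = fun x => g ((W.map (fun a => (a:ℝ))).mulVec x))
    (hconv : ConvexOn ℝ Set.univ g) (hdiff : Differentiable ℝ f)
    (hLip : ∀ x y : Fin n → ℝ, ∀ k : Fin n,
      |fderiv ℝ f x (Pi.single k 1) - fderiv ℝ f y (Pi.single k 1)| ≤ L * ∑ i, |x i - y i|)
    (hprox : ∀ x : Fin n → ℝ, (∀ i, x i ∈ Set.Icc (0:ℝ) 1) →
      (∀ y : Fin n → ℝ, (∀ i, y i ∈ Set.Icc (0:ℝ) 1) → f x ≤ f y) →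
      Set.ncard {i | x i ≠ 0 ∧ x i ≠ 1} ≤ m →
      ∃ z : Fin n → ℝ, (∀ i, z i = 0 ∨ z i = 1) ∧
        (∀ y : Fin n → ℝ, (∀ i, y i = 0 ∨ y i = 1) → f z ≤ f y) ∧
        ∑ i, |x i - z i| ≤ δ)
    (xs : Fin n → ℝ) (hxs : ∀ i, xs i ∈ Set.Icc (0:ℝ) 1)
    (hmin : ∀ y : Fin n → ℝ, (∀ i, y i ∈ Set.Icc (0:ℝ) 1) → f xs ≤ f y)
    (hfrac : Set.ncard {i | xs i ≠ 0 ∧ xs i ≠ 1} ≤ m) :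
    ∃ z : Fin n → ℝ, (∀ i, z i = 0 ∨ z i = 1) ∧
      (∀ y : Fin n → ℝ, (∀ i, y i = 0 ∨ y i = 1) → f z ≤ f y) ∧
      ∀ k : Fin n,
        ((δ - 1) * L < fderiv ℝ f xs (Pi.single k 1) → z k = 0) ∧
        (fderiv ℝ f xs (Pi.single k 1) < -((δ - 1) * L) → z k = 1) := by
  have hfconv : ConvexOn ℝ Set.univ f := by
    subst hf
    have := hconv.comp_affineMap (W.map (fun a => (a:ℝ))).mulVecLin.toAffineMap
    simpa [Function.comp_def, Matrix.mulVecLin_apply] using this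
  have hgi := grad_ineq_aux hfconv hdiff
  have hfo := fo_aux hdiff hxs hmin
  obtain ⟨z, hz01, hzmin, hzsum⟩ := hprox xs hxs hmin hfrac
  refine ⟨z, hz01, hzmin, fun k => ?_⟩
  have hL0 : 0 ≤ L := by
    have h1 := hLip (0 : Fin n → ℝ) (Pi.single k 1) k
    have hsum1 : ∑ i, |(0 : Fin n → ℝ) i - (Pi.single k 1 : Fin n → ℝ) i| = 1 := by
      have he : ∀ i : Fin n, |(0 : Fin n → ℝ) i - (Pi.single k 1 : Fin n → ℝ) i|
          = if i = k then 1 else 0 := by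
        intro i
        by_cases hik : i = k
        · subst hik; simp
        · simp [Pi.single_apply, hik]
      rw [Finset.sum_congr rfl (fun i _ => he i)]
      simp
    rw [hsum1, mul_one] at h1
    exact le_trans (abs_nonneg _) h1
  set d := fderiv ℝ f xs (Pi.single k 1) with hd
  constructor
  · intro hd1
    have hdpos : 0 < d := lt_of_le_of_lt (mul_nonneg (by linarith) hL0) hd1
    have hxk0 : xs k = 0 := (hfo k).1 hdpos
    rcases hz01 k with hzk | hzk
    · exact hzk
    · exfalso
      set zh := Function.update z k (0:ℝ) with hzh
      have hzh01 : ∀ i, zh i = 0 ∨ zh i = 1 := by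
        intro i; by_cases hik : i = k
        · subst hik; left; simp [hzh]
        · simpa [hzh, Function.update, hik] using hz01 i
      have hsumz : ∑ i, |xs i - zh i| ≤ δ - 1 := by
        have h1 : ∑ i, |xs i - zh i| = ∑ i ∈ Finset.univ.erase k, |xs i - z i| := by
          rw [← Finset.sum_erase_add _ _ (Finset.mem_univ k)]
          have e1 : |xs k - zh k| = 0 := by simp [hzh, hxk0]
          rw [e1, add_zero]
          refine Finset.sum_congr rfl fun i hi => ?_
          have hik := Finset.ne_of_mem_erase hi
          simp [hzh, Function.update, hik]
        have h2 : ∑ i, |xs i - z i| = ∑ i ∈ Finset.univ.erase k, |xs i - z i| + 1 := by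
          rw [← Finset.sum_erase_add _ _ (Finset.mem_univ k)]
          simp [hxk0, hzk]
        linarith
      have hlip2 := hLip xs zh k
      have h3 : L * ∑ i, |xs i - zh i| ≤ L * (δ - 1) := mul_le_mul_of_nonneg_left hsumz hL0
      have h4 : d - fderiv ℝ f zh (Pi.single k 1) ≤ L * (δ - 1) :=
        le_trans (le_trans (le_abs_self _) hlip2) h3
      have hDpos : 0 < fderiv ℝ f zh (Pi.single k 1) := by nlinarith
      have hzzh : z - zh = Pi.single k (1:ℝ) := by
        funext i
        by_cases hik : i = k
        · subst hik; simp [hzh, hzk]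
        · simp [hzh, Function.update, hik, Pi.single_eq_of_ne hik]
      have hgi2 := hgi zh z
      rw [hzzh] at hgi2
      have hle := hzmin zh hzh01
      linarith
  · intro hd2
    have hdneg : d < 0 := lt_of_lt_of_le hd2 (by nlinarith)
    have hxk1 : xs k = 1 := (hfo k).2 hdneg
    rcases hz01 k with hzk | hzk
    · exfalso
      set zh := Function.update z k (1:ℝ) with hzh
      have hzh01 : ∀ i, zh i = 0 ∨ zh i = 1 := by
        intro i; by_cases hik : i = k
        · subst hik; right; simp [hzh]
        · simpa [hzh, Function.update, hik] using hz01 i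
      have hsumz : ∑ i, |xs i - zh i| ≤ δ - 1 := by
        have h1 : ∑ i, |xs i - zh i| = ∑ i ∈ Finset.univ.erase k, |xs i - z i| := by
          rw [← Finset.sum_erase_add _ _ (Finset.mem_univ k)]
          have e1 : |xs k - zh k| = 0 := by simp [hzh, hxk1]
          rw [e1, add_zero]
          refine Finset.sum_congr rfl fun i hi => ?_
          have hik := Finset.ne_of_mem_erase hi
          simp [hzh, Function.update, hik]
        have h2 : ∑ i, |xs i - z i| = ∑ i ∈ Finset.univ.erase k, |xs i - z i| + 1 := by
          rw [← Finset.sum_erase_add _ _ (Finset.mem_univ k)]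
          simp [hxk1, hzk]
        linarith
      have hlip2 := hLip xs zh k
      have h3 : L * ∑ i, |xs i - zh i| ≤ L * (δ - 1) := mul_le_mul_of_nonneg_left hsumz hL0
      have h4 : fderiv ℝ f zh (Pi.single k 1) - d ≤ L * (δ - 1) := by
        have h5 : -(d - fderiv ℝ f zh (Pi.single k 1)) ≤ |d - fderiv ℝ f zh (Pi.single k 1)| :=
          neg_le_abs _
        have h6 := le_trans hlip2 h3
        linarith
      have hDneg : fderiv ℝ f zh (Pi.single k 1) < 0 := by nlinarith
      have hzzh : z - zh = -(Pi.single k (1:ℝ)) := by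
        funext i
        by_cases hik : i = k
        · subst hik; simp [hzh, hzk]
        · simp [hzh, Function.update, hik, Pi.single_eq_of_ne hik]
      have hgi2 := hgi zh z
      rw [hzzh, map_neg] at hgi2
      have hle := hzmin zh hzh01
      linarith
    · exact hzk
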